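/- Let h : (0,∞) → ℝ be a square-integrable function. Then ∫₀^∞ ∫₀^∞ |h(q)| |h(q′)| / (q + q′) dq dq′ ≤ π ∫₀^∞ h(q)² dq. -/

import Mathlib

open MeasureTheory Set Real
open scoped ENNReal

lemma aux_inv_integrable {a : ℝ} (ha : 0 < a) :
    Integrable (fun x : ℝ => (a + x ^ 2)⁻¹) := by
  have hsa : (0:ℝ) < Real.sqrt a := Real.sqrt_pos.mpr ha
  have key : ∀ x : ℝ, (a + x ^ 2)⁻¹ = a⁻¹ * (1 + (x * (Real.sqrt a)⁻¹) ^ 2)⁻¹ := by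
    intro x
    have : Real.sqrt a ^ 2 = a := Real.sq_sqrt ha.le
    field_simp
    rw [this]; ring
  simp_rw [key]
  exact (integrable_inv_one_add_sq.comp_mul_right' (inv_ne_zero hsa.ne')).const_mul _

lemma aux_inv_integral {a : ℝ} (ha : 0 < a) :
    ∫ x in Ioi (0:ℝ), (a + x ^ 2)⁻¹ = π / (2 * Real.sqrt a) := by
  have hsa : (0:ℝ) < Real.sqrt a := Real.sqrt_pos.mpr ha
  have key : ∀ x : ℝ, (a + x ^ 2)⁻¹ = a⁻¹ * (1 + (x * (Real.sqrt a)⁻¹) ^ 2)⁻¹ := by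
    intro x
    have : Real.sqrt a ^ 2 = a := Real.sq_sqrt ha.le
    field_simp
    rw [this]; ring
  simp_rw [key]
  rw [integral_const_mul]
  rw [integral_comp_mul_right_Ioi (fun u => (1 + u ^ 2)⁻¹) 0 (inv_pos.mpr hsa)]
  simp only [zero_mul, smul_eq_mul, inv_inv]
  rw [integral_Ioi_inv_one_add_sq]
  have h2 : a = Real.sqrt a * Real.sqrt a := (Real.mul_self_sqrt ha.le).symm
  rw [Real.arctan_zero]
  field_simp
  linear_combination π * (Real.mul_self_sqrt ha.le)

lemma sub_eqOn {a : ℝ} (ha : 0 < a) :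
    EqOn (fun x : ℝ => Real.sqrt a * (a + x ^ 2)⁻¹)
      (fun x : ℝ => x ^ ((2:ℝ) - 1) •
        (Real.sqrt a / (Real.sqrt (x ^ (2:ℝ)) * (a + x ^ (2:ℝ))))) (Ioi 0) := by
  intro x hx
  have hx0 : (0:ℝ) < x := hx
  have h1 : x ^ ((2:ℝ) - 1) = x := by norm_num
  have h2 : x ^ (2:ℝ) = x ^ 2 := by
    rw [show (2:ℝ) = ((2:ℕ):ℝ) by norm_num, Real.rpow_natCast]
  have h3 : Real.sqrt (x ^ 2) = x := Real.sqrt_sq hx0.le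
  simp only [smul_eq_mul, h1, h2, h3]
  field_simp

lemma key_integrableOn {a : ℝ} (ha : 0 < a) :
    IntegrableOn (fun x => Real.sqrt a / (Real.sqrt x * (a + x))) (Ioi (0:ℝ)) := by
  rw [← integrableOn_Ioi_comp_rpow_iff' _ (two_ne_zero : (2:ℝ) ≠ 0)]
  exact (((aux_inv_integrable ha).const_mul (Real.sqrt a)).integrableOn).congr_fun
    (sub_eqOn ha) measurableSet_Ioi

lemma key_integral {a : ℝ} (ha : 0 < a) :
    ∫ x in Ioi (0:ℝ), Real.sqrt a / (Real.sqrt x * (a + x)) = π := by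
  have hsa : (0:ℝ) < Real.sqrt a := Real.sqrt_pos.mpr ha
  rw [← integral_comp_rpow_Ioi_of_pos (g := fun y => Real.sqrt a / (Real.sqrt y * (a + y)))
    zero_lt_two]
  have : ∫ x in Ioi (0:ℝ), (2 * x ^ ((2:ℝ) - 1)) •
      (Real.sqrt a / (Real.sqrt (x ^ (2:ℝ)) * (a + x ^ (2:ℝ))))
      = ∫ x in Ioi (0:ℝ), 2 * (Real.sqrt a * (a + x ^ 2)⁻¹) := by
    refine setIntegral_congr_fun measurableSet_Ioi fun x hx => ?_
    have := sub_eqOn ha hx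
    simp only [smul_eq_mul] at this ⊢
    rw [mul_assoc, ← this]
  rw [this]
  rw [integral_const_mul, integral_const_mul, aux_inv_integral ha]
  field_simp

lemma key_lintegral {a : ℝ} (ha : 0 < a) :
    ∫⁻ x in Ioi (0:ℝ), ENNReal.ofReal (Real.sqrt a / (Real.sqrt x * (a + x)))
      = ENNReal.ofReal π := by
  rw [← ofReal_integral_eq_lintegral_ofReal (key_integrableOn ha) ?_, key_integral ha]
  filter_upwards [ae_restrict_mem measurableSet_Ioi] with x hx
  exact div_nonneg (Real.sqrt_nonneg _)
    (mul_nonneg (Real.sqrt_nonneg _) (by have := mem_Ioi.mp hx; linarith))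

theorem hilbert_inequality
    (h : ℝ → ℝ) (hh : MemLp h 2 (volume.restrict (Set.Ioi (0 : ℝ)))) :
    (∫ q in Set.Ioi (0 : ℝ), ∫ q' in Set.Ioi (0 : ℝ), |h q| * |h q'| / (q + q'))
      ≤ Real.pi * ∫ q in Set.Ioi (0 : ℝ), h q ^ 2 := by
  set μ := volume.restrict (Set.Ioi (0 : ℝ)) with hμ
  obtain ⟨h₀, h₀sm, heq⟩ : ∃ h₀, StronglyMeasurable h₀ ∧ h =ᵐ[μ] h₀ :=
    ⟨hh.1.mk h, hh.1.stronglyMeasurable_mk, hh.1.ae_eq_mk⟩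
  have h₀m : Measurable h₀ := h₀sm.measurable
  -- measurability facts
  have msqrt : Measurable fun x : ℝ => Real.sqrt x := Real.continuous_sqrt.measurable
  have mF : Measurable fun p : ℝ × ℝ =>
      ENNReal.ofReal (|h₀ p.1| * |h₀ p.2| / (p.1 + p.2)) := by
    apply Measurable.ennreal_ofReal
    exact (((h₀m.comp measurable_fst).abs.mul (h₀m.comp measurable_snd).abs).div
      (measurable_fst.add measurable_snd))
  have mB : Measurable fun p : ℝ × ℝ =>
      ENNReal.ofReal ((1/2) * h₀ p.2 ^ 2 *
        (Real.sqrt p.2 / (Real.sqrt p.1 * (p.1 + p.2)))) := by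
    apply Measurable.ennreal_ofReal
    exact ((measurable_const.mul ((h₀m.comp measurable_snd).pow_const 2)).mul
      ((msqrt.comp measurable_snd).div
        ((msqrt.comp measurable_fst).mul (measurable_fst.add measurable_snd))))
  have mA : Measurable fun p : ℝ × ℝ =>
      ENNReal.ofReal ((1/2) * h₀ p.1 ^ 2 *
        (Real.sqrt p.1 / (Real.sqrt p.2 * (p.1 + p.2)))) := by
    apply Measurable.ennreal_ofReal
    exact ((measurable_const.mul ((h₀m.comp measurable_fst).pow_const 2)).mul
      ((msqrt.comp measurable_fst).div
        ((msqrt.comp measurable_snd).mul (measurable_fst.add measurable_snd))))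
  -- the L² lintegral
  set J : ℝ≥0∞ := ∫⁻ q, ENNReal.ofReal (h₀ q ^ 2) ∂μ with hJdef
  have hsq : Integrable (fun q => h₀ q ^ 2) μ :=
    (hh.integrable_sq).congr (heq.mono fun x hx => by simp only []; rw [hx])
  have hJ : J ≠ ∞ := hsq.lintegral_lt_top.ne
  -- the key inner computation
  have inner_key : ∀ c a : ℝ, 0 ≤ c → 0 < a →
      (∫⁻ x, ENNReal.ofReal (c * (Real.sqrt a / (Real.sqrt x * (a + x)))) ∂μ)
        = ENNReal.ofReal c * ENNReal.ofReal π := by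
    intro c a hc ha
    calc (∫⁻ x, ENNReal.ofReal (c * (Real.sqrt a / (Real.sqrt x * (a + x)))) ∂μ)
        = ∫⁻ x, ENNReal.ofReal c *
            ENNReal.ofReal (Real.sqrt a / (Real.sqrt x * (a + x))) ∂μ := by
          refine lintegral_congr fun x => ?_
          rw [ENNReal.ofReal_mul hc]
      _ = ENNReal.ofReal c *
            ∫⁻ x, ENNReal.ofReal (Real.sqrt a / (Real.sqrt x * (a + x))) ∂μ :=
          lintegral_const_mul' _ _ ENNReal.ofReal_ne_top
      _ = ENNReal.ofReal c * ENNReal.ofReal π := by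
          rw [hμ, key_lintegral ha]
  -- pointwise bound
  have ptwise : ∀ q ∈ Ioi (0:ℝ), ∀ q' ∈ Ioi (0:ℝ),
      |h₀ q| * |h₀ q'| / (q + q') ≤
        (1/2) * h₀ q ^ 2 * (Real.sqrt q / (Real.sqrt q' * (q + q')))
        + (1/2) * h₀ q' ^ 2 * (Real.sqrt q' / (Real.sqrt q * (q + q'))) := by
    intro q hq q' hq'
    have hq0 : (0:ℝ) < q := hq
    have hq'0 : (0:ℝ) < q' := hq'
    have hu : (0:ℝ) < Real.sqrt q := Real.sqrt_pos.mpr hq0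
    have hv : (0:ℝ) < Real.sqrt q' := Real.sqrt_pos.mpr hq'0
    have hsum : (0:ℝ) < q + q' := by linarith
    set a := |h₀ q| with hadef
    set b := |h₀ q'| with hbdef
    set u := Real.sqrt q
    set v := Real.sqrt q'
    have ha2 : h₀ q ^ 2 = a ^ 2 := (sq_abs _).symm
    have hb2 : h₀ q' ^ 2 = b ^ 2 := (sq_abs _).symm
    rw [ha2, hb2]
    have core : a * b ≤ (1/2) * a ^ 2 * (u/v) + (1/2) * b ^ 2 * (v/u) := by
      have hnn : (0:ℝ) ≤ (a*u - b*v)^2 / (2*(u*v)) :=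
        div_nonneg (sq_nonneg _) (by positivity)
      have hid : (a*u - b*v)^2 / (2*(u*v))
          = (1/2) * a ^ 2 * (u/v) + (1/2) * b ^ 2 * (v/u) - a * b := by
        field_simp
        ring
      linarith [hid ▸ hnn]
    have e : (1/2) * a ^ 2 * (u/(v*(q+q'))) + (1/2) * b ^ 2 * (v/(u*(q+q')))
        = ((1/2) * a ^ 2 * (u/v) + (1/2) * b ^ 2 * (v/u)) / (q + q') := by
      field_simp
    rw [e]
    gcongr
  -- the double lintegral
  set F : ℝ → ℝ≥0∞ := fun q =>
    ∫⁻ q', ENNReal.ofReal (|h₀ q| * |h₀ q'| / (q + q')) ∂μ with hFdef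
  have mFq : Measurable F := mF.lintegral_prod_right'
  set I : ℝ≥0∞ := ∫⁻ q, F q ∂μ with hIdef
  have hJh : (∫⁻ q, ENNReal.ofReal ((1/2) * h₀ q ^ 2) ∂μ)
      + (∫⁻ q, ENNReal.ofReal ((1/2) * h₀ q ^ 2) ∂μ) = J := by
    rw [← lintegral_add_left (((h₀m.pow_const 2).const_mul _).ennreal_ofReal)]
    refine lintegral_congr fun q => ?_
    rw [← ENNReal.ofReal_add (by positivity) (by positivity)]
    congr 1
    ring
  have Ibound : I ≤ ENNReal.ofReal π * J := by
    calc I ≤ ∫⁻ q, ∫⁻ q',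
          (ENNReal.ofReal ((1/2) * h₀ q ^ 2 *
              (Real.sqrt q / (Real.sqrt q' * (q + q'))))
            + ENNReal.ofReal ((1/2) * h₀ q' ^ 2 *
              (Real.sqrt q' / (Real.sqrt q * (q + q'))))) ∂μ ∂μ := by
          refine lintegral_mono_ae ?_
          filter_upwards [ae_restrict_mem measurableSet_Ioi] with q hq
          refine lintegral_mono_ae ?_
          filter_upwards [ae_restrict_mem measurableSet_Ioi] with q' hq'
          exact le_trans (ENNReal.ofReal_le_ofReal (ptwise q hq q' hq'))
            ENNReal.ofReal_add_le
      _ = (∫⁻ q, ∫⁻ q', ENNReal.ofReal ((1/2) * h₀ q ^ 2 *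
              (Real.sqrt q / (Real.sqrt q' * (q + q')))) ∂μ ∂μ)
          + ∫⁻ q, ∫⁻ q', ENNReal.ofReal ((1/2) * h₀ q' ^ 2 *
              (Real.sqrt q' / (Real.sqrt q * (q + q')))) ∂μ ∂μ := by
          have e1 : ∀ q : ℝ, (∫⁻ q',
              (ENNReal.ofReal ((1/2) * h₀ q ^ 2 *
                (Real.sqrt q / (Real.sqrt q' * (q + q'))))
              + ENNReal.ofReal ((1/2) * h₀ q' ^ 2 *
                (Real.sqrt q' / (Real.sqrt q * (q + q'))))) ∂μ)
              = (∫⁻ q', ENNReal.ofReal ((1/2) * h₀ q ^ 2 *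
                  (Real.sqrt q / (Real.sqrt q' * (q + q')))) ∂μ)
                + ∫⁻ q', ENNReal.ofReal ((1/2) * h₀ q' ^ 2 *
                  (Real.sqrt q' / (Real.sqrt q * (q + q')))) ∂μ :=
            fun q => lintegral_add_left (mA.comp measurable_prodMk_left) _
          rw [lintegral_congr e1, lintegral_add_left (mA.lintegral_prod_right')]
      _ = (∫⁻ q, ENNReal.ofReal ((1/2) * h₀ q ^ 2) * ENNReal.ofReal π ∂μ)
          + ∫⁻ q', ENNReal.ofReal ((1/2) * h₀ q' ^ 2) * ENNReal.ofReal π ∂μ := by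
          congr 1
          · refine lintegral_congr_ae ?_
            filter_upwards [ae_restrict_mem measurableSet_Ioi] with q hq
            exact inner_key _ _ (by positivity) hq
          · rw [lintegral_lintegral_swap mB.aemeasurable]
            refine lintegral_congr_ae ?_
            filter_upwards [ae_restrict_mem measurableSet_Ioi] with q' hq'
            have : (fun q => ENNReal.ofReal ((1/2) * h₀ q' ^ 2 *
                (Real.sqrt q' / (Real.sqrt q * (q + q')))))
                = fun q => ENNReal.ofReal ((1/2) * h₀ q' ^ 2 *
                (Real.sqrt q' / (Real.sqrt q * (q' + q)))) := by
              funext q; rw [add_comm q q']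
            rw [this]
            exact inner_key _ _ (by positivity) hq'
      _ = (∫⁻ q, ENNReal.ofReal ((1/2) * h₀ q ^ 2) ∂μ) * ENNReal.ofReal π
          + (∫⁻ q, ENNReal.ofReal ((1/2) * h₀ q ^ 2) ∂μ) * ENNReal.ofReal π := by
          rw [lintegral_mul_const' _ _ ENNReal.ofReal_ne_top]
      _ = ENNReal.ofReal π * J := by
          rw [← add_mul, hJh, mul_comm]
  have hIne : I ≠ ∞ :=
    (Ibound.trans_lt (ENNReal.mul_lt_top ENNReal.ofReal_lt_top hJ.lt_top)).ne
  -- convert to Bochner integrals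
  have aefin : ∀ᵐ q ∂μ, F q < ∞ := ae_lt_top mFq hIne
  have aeq1 : (fun q => ∫ q', |h q| * |h q'| / (q + q') ∂μ)
      =ᵐ[μ] fun q => (F q).toReal := by
    filter_upwards [heq, ae_restrict_mem measurableSet_Ioi] with q hq hqpos
    have hq0 : (0:ℝ) < q := hqpos
    have inner_eq : (∫ q', |h q| * |h q'| / (q + q') ∂μ)
        = ∫ q', |h₀ q| * |h₀ q'| / (q + q') ∂μ :=
      integral_congr_ae (heq.mono fun q' hq' => by
        show |h q| * |h q'| / (q + q') = _
        rw [hq, hq'])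
    show _ = (F q).toReal
    rw [inner_eq, integral_eq_lintegral_of_nonneg_ae ?nonneg ?meas]
    case nonneg =>
      filter_upwards [ae_restrict_mem measurableSet_Ioi] with q' hq'
      have hq'0 : (0:ℝ) < q' := hq'
      exact div_nonneg (by positivity) (by linarith)
    case meas =>
      exact ((measurable_const.mul h₀m.abs).div
        (measurable_const.add measurable_id)).aestronglyMeasurable
  have LHS_eq : (∫ q, ∫ q', |h q| * |h q'| / (q + q') ∂μ ∂μ) = I.toReal := by
    rw [integral_congr_ae aeq1, integral_toReal mFq.aemeasurable aefin]
  have RHS_eq : (∫ q, h q ^ 2 ∂μ) = J.toReal := by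
    rw [integral_congr_ae (heq.mono fun q hq => by show h q ^ 2 = _; rw [hq]),
      integral_eq_lintegral_of_nonneg_ae (ae_of_all _ fun q => sq_nonneg _)
        (h₀m.pow_const 2).aestronglyMeasurable]
  rw [LHS_eq, RHS_eq]
  calc I.toReal ≤ (ENNReal.ofReal π * J).toReal :=
        ENNReal.toReal_mono (ENNReal.mul_ne_top ENNReal.ofReal_ne_top hJ) Ibound
    _ = π * J.toReal := by
        rw [ENNReal.toReal_mul, ENNReal.toReal_ofReal Real.pi_pos.le]
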